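/- Let ω = (1/√d) Σᵢ eᵢ⊗eᵢ be the maximally entangled vector in ℂ^d⊗ℂ^d, F the flip on the first two factors of ℂ^d⊗ℂ^d⊗ℂ^d, and E = (F⊗I)(I⊗|ω⟩⟨ω|)(F⊗I) + I⊗|ω⟩⟨ω|. Then E is a positive selfadjoint operator whose nonzero eigenvalues are exactly (d+1)/d and (d−1)/d, with eigenspaces { Σᵢ (v⊗eᵢ ± eᵢ⊗v)⊗eᵢ : v ∈ ℂ^d } respectively; in particular the maximal eigenvalue of E is (d+1)/d. -/

import Mathlib

/-- The maximally entangled vector `ω = (1/√d) Σᵢ eᵢ⊗eᵢ` of `ℂ^d ⊗ ℂ^d`. -/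
noncomputable def omegaVec (d : ℕ) : Fin d × Fin d → ℂ :=
  fun p => if p.1 = p.2 then (1 / Real.sqrt d : ℝ) else 0

/-- The operator `I ⊗ |ω⟩⟨ω|` on `ℂ^d ⊗ ℂ^d ⊗ ℂ^d` (rank-one projection on the last two
factors). -/
noncomputable def IomOm (d : ℕ) (w : Fin d × Fin d × Fin d → ℂ) :
    Fin d × Fin d × Fin d → ℂ :=
  fun q => (∑ p : Fin d × Fin d, (starRingEnd ℂ) (omegaVec d p) * w (q.1, p.1, p.2)) *
    omegaVec d (q.2.1, q.2.2)

/-- The operator `F ⊗ I` on `ℂ^d ⊗ ℂ^d ⊗ ℂ^d` (swap of the first two factors). -/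
def swap12 (d : ℕ) (w : Fin d × Fin d × Fin d → ℂ) : Fin d × Fin d × Fin d → ℂ :=
  fun q => w (q.2.1, q.1, q.2.2)

/-- `E = (F⊗I)(I⊗|ω⟩⟨ω|)(F⊗I) + I⊗|ω⟩⟨ω|`. -/
noncomputable def Eop (d : ℕ) (w : Fin d × Fin d × Fin d → ℂ) : Fin d × Fin d × Fin d → ℂ :=
  swap12 d (IomOm d (swap12 d w)) + IomOm d w

/-- The vector `Σᵢ (v⊗eᵢ + ε eᵢ⊗v)⊗eᵢ` (`ε = ±1`), written in coordinates. -/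
def eigVec {d : ℕ} (ε : ℂ) (v : Fin d → ℂ) : Fin d × Fin d × Fin d → ℂ :=
  fun q => v q.1 * (if q.2.1 = q.2.2 then 1 else 0) +
    ε * (v q.2.1 * (if q.1 = q.2.2 then 1 else 0))

/-- The inner product of `ℂ^d ⊗ ℂ^d ⊗ ℂ^d`. -/
noncomputable def inn3 {d : ℕ} (w w' : Fin d × Fin d × Fin d → ℂ) : ℂ :=
  ∑ q : Fin d × Fin d × Fin d, (starRingEnd ℂ) (w q) * w' q

noncomputable def aF {d : ℕ} (w : Fin d × Fin d × Fin d → ℂ) (j : Fin d) : ℂ := ∑ m, w (m, j, m)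
noncomputable def bF {d : ℕ} (w : Fin d × Fin d × Fin d → ℂ) (i : Fin d) : ℂ := ∑ m, w (i, m, m)

lemma sqinv (d : ℕ) :
    ((1 / Real.sqrt d : ℝ) : ℂ) * ((1 / Real.sqrt d : ℝ) : ℂ) = ((d:ℂ))⁻¹ := by
  rw [← Complex.ofReal_mul]
  have h : (1 / Real.sqrt d) * (1 / Real.sqrt d) = (d : ℝ)⁻¹ := by
    rw [div_mul_div_comm, one_mul, Real.mul_self_sqrt (Nat.cast_nonneg d), one_div]
  rw [h]
  simp

lemma IomOm_apply (d : ℕ) (w : Fin d × Fin d × Fin d → ℂ) (q : Fin d × Fin d × Fin d) :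
    IomOm d w q = ((d:ℂ))⁻¹ * ((if q.2.1 = q.2.2 then 1 else 0) * bF w q.1) := by
  unfold IomOm omegaVec bF
  rw [Fintype.sum_prod_type]
  simp only [apply_ite (starRingEnd ℂ), map_zero, Complex.conj_ofReal, ite_mul, zero_mul,
    Finset.sum_ite_eq, Finset.mem_univ, if_true]
  rcases eq_or_ne q.2.1 q.2.2 with h | h
  · simp only [h, if_pos rfl, if_true, mul_one, one_mul]
    rw [Finset.sum_mul, Finset.mul_sum]
    apply Finset.sum_congr rfl
    intro m _
    rw [mul_comm (((1 / Real.sqrt d : ℝ) : ℂ)) (w (q.1, m, m)), mul_assoc, sqinv]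
    ring
  · simp [h]

lemma Eop_apply (d : ℕ) (w : Fin d × Fin d × Fin d → ℂ) (q : Fin d × Fin d × Fin d) :
    Eop d w q = ((d:ℂ))⁻¹ * ((if q.1 = q.2.2 then 1 else 0) * aF w q.2.1 +
      (if q.2.1 = q.2.2 then 1 else 0) * bF w q.1) := by
  show swap12 d (IomOm d (swap12 d w)) q + IomOm d w q = _
  rw [show swap12 d (IomOm d (swap12 d w)) q = IomOm d (swap12 d w) (q.2.1, q.1, q.2.2) from rfl,
      IomOm_apply, IomOm_apply]
  have hb : bF (swap12 d w) q.2.1 = aF w q.2.1 := rfl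
  rw [hb]
  ring

lemma inn3_conj {d : ℕ} (w w' : Fin d × Fin d × Fin d → ℂ) :
    (starRingEnd ℂ) (inn3 w w') = inn3 w' w := by
  unfold inn3
  rw [map_sum]
  apply Finset.sum_congr rfl
  intro q _
  simp [mul_comm]

lemma inn3_Eop (d : ℕ) (w w' : Fin d × Fin d × Fin d → ℂ) :
    inn3 w (Eop d w') = ((d:ℂ))⁻¹ *
      ((∑ j, (starRingEnd ℂ) (aF w j) * aF w' j) +
        ∑ i, (starRingEnd ℂ) (bF w i) * bF w' i) := by
  unfold inn3
  simp only [Eop_apply]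
  have key : ∀ q : Fin d × Fin d × Fin d,
      (starRingEnd ℂ) (w q) * ((d:ℂ)⁻¹ * ((if q.1 = q.2.2 then 1 else 0) * aF w' q.2.1 +
        (if q.2.1 = q.2.2 then 1 else 0) * bF w' q.1)) =
      (d:ℂ)⁻¹ * ((if q.1 = q.2.2 then 1 else 0) * ((starRingEnd ℂ) (w q) * aF w' q.2.1) +
        (if q.2.1 = q.2.2 then 1 else 0) * ((starRingEnd ℂ) (w q) * bF w' q.1)) :=
    fun q => by ring
  simp only [key]
  rw [← Finset.mul_sum]
  congr 1
  rw [Finset.sum_add_distrib]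
  congr 1
  · rw [Fintype.sum_prod_type]
    simp only [Fintype.sum_prod_type, ite_mul, one_mul, zero_mul, Finset.sum_ite_eq,
      Finset.mem_univ, if_true]
    rw [Finset.sum_comm]
    apply Finset.sum_congr rfl
    intro j _
    rw [show aF w j = ∑ m, w (m, j, m) from rfl, map_sum, Finset.sum_mul]
  · rw [Fintype.sum_prod_type]
    simp only [Fintype.sum_prod_type, ite_mul, one_mul, zero_mul, Finset.sum_ite_eq,
      Finset.mem_univ, if_true]
    apply Finset.sum_congr rfl
    intro i _
    rw [show bF w i = ∑ m, w (i, m, m) from rfl, map_sum, Finset.sum_mul]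

lemma Eop_sa (d : ℕ) (w w' : Fin d × Fin d × Fin d → ℂ) :
    inn3 (Eop d w) w' = inn3 w (Eop d w') := by
  rw [← inn3_conj, inn3_Eop, inn3_Eop]
  simp only [map_mul, map_add, map_sum, map_inv₀, map_natCast, RingHomCompTriple.comp_apply,
    RingHom.id_apply, Complex.conj_conj]
  congr 1
  congr 1 <;>
  · apply Finset.sum_congr rfl
    intro x _
    ring

lemma inn3_Eop_self (d : ℕ) (w : Fin d × Fin d × Fin d → ℂ) :
    inn3 w (Eop d w) = (((d:ℝ)⁻¹ * ((∑ j, Complex.normSq (aF w j)) +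
      ∑ i, Complex.normSq (bF w i)) : ℝ) : ℂ) := by
  rw [inn3_Eop]
  push_cast
  congr 1
  congr 1 <;>
  · apply Finset.sum_congr rfl
    intro x _
    rw [← Complex.normSq_eq_conj_mul_self]

lemma aF_eigVec {d : ℕ} (ε : ℂ) (v : Fin d → ℂ) (j : Fin d) :
    aF (eigVec ε v) j = (1 + ε * d) * v j := by
  unfold aF eigVec
  rw [Finset.sum_add_distrib]
  simp only [if_pos rfl, mul_one, mul_ite, mul_zero, Finset.sum_ite_eq, Finset.mem_univ, if_true,
    Finset.sum_const, Finset.card_univ, Fintype.card_fin, nsmul_eq_mul]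
  ring

lemma bF_eigVec {d : ℕ} (ε : ℂ) (v : Fin d → ℂ) (i : Fin d) :
    bF (eigVec ε v) i = ((d : ℂ) + ε) * v i := by
  unfold bF eigVec
  rw [Finset.sum_add_distrib]
  simp only [if_pos rfl, mul_one, mul_ite, mul_zero, Finset.sum_ite_eq, Finset.mem_univ, if_true,
    Finset.sum_const, Finset.card_univ, Fintype.card_fin, nsmul_eq_mul]
  ring

lemma Eop_eigVec (d : ℕ) (hd0 : (d:ℂ) ≠ 0) (ε : ℂ) (hε : ε * ε = 1) (v : Fin d → ℂ) :
    Eop d (eigVec ε v) = (((d : ℂ) + ε) / d) • eigVec ε v := by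
  funext q
  rw [Pi.smul_apply, smul_eq_mul, Eop_apply, aF_eigVec, bF_eigVec]
  obtain ⟨i, j, k⟩ := q
  unfold eigVec
  simp only
  have h1 : (1 + ε * (d:ℂ)) = ε * ((d:ℂ) + ε) := by
    rw [mul_add, ← hε]; ring
  rw [h1]
  field_simp
  split_ifs <;> ring

lemma eig_rel (d : ℕ) (hd0 : (d:ℂ) ≠ 0) (μ : ℂ) (w : Fin d × Fin d × Fin d → ℂ)
    (h : Eop d w = μ • w) :
    (∀ j, (d:ℂ) * (μ - 1) * aF w j = bF w j) ∧
    (∀ i, (d:ℂ) * (μ - 1) * bF w i = aF w i) := by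
  have hq : ∀ q, Eop d w q = μ * w q := fun q => congrFun h q
  constructor
  · intro j
    have e1 : ∑ m, Eop d w (m, j, m) = μ * aF w j := by
      simp only [hq]
      rw [show aF w j = ∑ m, w (m, j, m) from rfl, Finset.mul_sum]
    have e2 : ∑ m, Eop d w (m, j, m) = (d:ℂ)⁻¹ * ((d:ℂ) * aF w j + bF w j) := by
      simp only [Eop_apply, if_pos rfl, one_mul]
      rw [← Finset.mul_sum, Finset.sum_add_distrib]
      simp only [ite_mul, one_mul, zero_mul, Finset.sum_ite_eq, Finset.mem_univ, if_true,
        Finset.sum_const, Finset.card_univ, Fintype.card_fin, nsmul_eq_mul]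
    have key := e1.symm.trans e2
    field_simp at key
    linear_combination key
  · intro i
    have e1 : ∑ m, Eop d w (i, m, m) = μ * bF w i := by
      simp only [hq]
      rw [show bF w i = ∑ m, w (i, m, m) from rfl, Finset.mul_sum]
    have e2 : ∑ m, Eop d w (i, m, m) = (d:ℂ)⁻¹ * (aF w i + (d:ℂ) * bF w i) := by
      simp only [Eop_apply, if_pos rfl, one_mul]
      rw [← Finset.mul_sum, Finset.sum_add_distrib]
      simp only [ite_mul, one_mul, zero_mul, Finset.sum_ite_eq, Finset.mem_univ, if_true,
        Finset.sum_const, Finset.card_univ, Fintype.card_fin, nsmul_eq_mul]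
    have key := e1.symm.trans e2
    field_simp at key
    linear_combination key

lemma eig_point (d : ℕ) (μ : ℂ) (w : Fin d × Fin d × Fin d → ℂ) (h : Eop d w = μ • w)
    (q : Fin d × Fin d × Fin d) :
    μ * w q = ((d:ℂ))⁻¹ * ((if q.1 = q.2.2 then 1 else 0) * aF w q.2.1 +
      (if q.2.1 = q.2.2 then 1 else 0) * bF w q.1) := by
  have h1 := congrFun h q
  rw [Eop_apply] at h1
  exact h1.symm

/-- `E = (F⊗I)(I⊗|ω⟩⟨ω|)(F⊗I) + I⊗|ω⟩⟨ω|` is a positive selfadjoint operator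
whose nonzero eigenvalues are exactly `(d+1)/d` and `(d−1)/d`, with eigenspaces
`{Σᵢ (v⊗eᵢ ± eᵢ⊗v)⊗eᵢ : v ∈ ℂ^d}`; in particular its maximal eigenvalue is `(d+1)/d`. -/
theorem Eop_selfadjoint_positive_eigenvalues (d : ℕ) (hd : 2 ≤ d) :
    (∀ w w' : Fin d × Fin d × Fin d → ℂ, inn3 (Eop d w) w' = inn3 w (Eop d w')) ∧
    (∀ w : Fin d × Fin d × Fin d → ℂ,
      0 ≤ (inn3 w (Eop d w)).re ∧ (inn3 w (Eop d w)).im = 0) ∧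
    ({w | Eop d w = (((d : ℂ) + 1) / d) • w} = {w | ∃ v : Fin d → ℂ, w = eigVec 1 v}) ∧
    ({w | Eop d w = (((d : ℂ) - 1) / d) • w} = {w | ∃ v : Fin d → ℂ, w = eigVec (-1) v}) ∧
    (∀ μ : ℂ, (∃ w : Fin d × Fin d × Fin d → ℂ, w ≠ 0 ∧ Eop d w = μ • w) →
      μ = 0 ∨ μ = ((d : ℂ) + 1) / d ∨ μ = ((d : ℂ) - 1) / d) ∧
    (∀ μ : ℂ, (∃ w : Fin d × Fin d × Fin d → ℂ, w ≠ 0 ∧ Eop d w = μ • w) →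
      μ.re ≤ ((d : ℝ) + 1) / d) := by

  have hd0 : (d:ℂ) ≠ 0 := Nat.cast_ne_zero.mpr (by omega)
  have hd1 : (d:ℂ) + 1 ≠ 0 := by
    have : ((d:ℂ)) + 1 = ((d + 1 : ℕ) : ℂ) := by push_cast; ring
    rw [this]
    exact Nat.cast_ne_zero.mpr (by omega)
  have hdm1 : (d:ℂ) - 1 ≠ 0 := by
    refine sub_ne_zero.mpr ?_
    intro hcon
    have : d = 1 := by exact_mod_cast hcon
    omega
  have hdR : (0:ℝ) < d := by positivity
  -- Part 5 first, since Part 6 uses it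
  have part5 : ∀ μ : ℂ, (∃ w : Fin d × Fin d × Fin d → ℂ, w ≠ 0 ∧ Eop d w = μ • w) →
      μ = 0 ∨ μ = ((d : ℂ) + 1) / d ∨ μ = ((d : ℂ) - 1) / d := by
    intro μ ⟨w, hw0, hEw⟩
    by_cases hμ : μ = 0
    · exact Or.inl hμ
    right
    obtain ⟨rel1, rel2⟩ := eig_rel d hd0 μ w hEw
    have htt : ((d:ℂ) * (μ - 1)) * ((d:ℂ) * (μ - 1)) = 1 := by
      by_cases hA : ∀ j, aF w j = 0
      · by_cases hB : ∀ i, bF w i = 0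
        · exfalso
          apply hw0
          have hE0 : Eop d w = 0 := by
            funext q
            rw [Eop_apply, hA, hB]
            simp
          rw [hE0] at hEw
          rcases smul_eq_zero.mp hEw.symm with h | h
          · exact absurd h hμ
          · exact h
        · push_neg at hB
          obtain ⟨i, hi⟩ := hB
          have : ((d:ℂ) * (μ - 1)) * ((d:ℂ) * (μ - 1)) * bF w i = bF w i := by
            rw [mul_assoc, rel2 i, rel1 i]
          have h2 : (((d:ℂ) * (μ - 1)) * ((d:ℂ) * (μ - 1)) - 1) * bF w i = 0 := by
            linear_combination this
          rcases mul_eq_zero.mp h2 with h3 | h3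
          · linear_combination h3
          · exact absurd h3 hi
      · push_neg at hA
        obtain ⟨j, hj⟩ := hA
        have : ((d:ℂ) * (μ - 1)) * ((d:ℂ) * (μ - 1)) * aF w j = aF w j := by
          rw [mul_assoc, rel1 j, rel2 j]
        have h2 : (((d:ℂ) * (μ - 1)) * ((d:ℂ) * (μ - 1)) - 1) * aF w j = 0 := by
          linear_combination this
        rcases mul_eq_zero.mp h2 with h3 | h3
        · linear_combination h3
        · exact absurd h3 hj
    have hfac : ((d:ℂ) * (μ - 1) - 1) * ((d:ℂ) * (μ - 1) + 1) = 0 := by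
      linear_combination htt
    rcases mul_eq_zero.mp hfac with h3 | h3
    · left
      rw [eq_div_iff hd0]
      linear_combination h3
    · right
      rw [eq_div_iff hd0]
      linear_combination h3
  refine ⟨Eop_sa d, ?_, ?_, ?_, part5, ?_⟩
  · -- positivity
    intro w
    rw [inn3_Eop_self]
    constructor
    · rw [Complex.ofReal_re]
      have h1 : 0 ≤ ∑ j, Complex.normSq (aF w j) :=
        Finset.sum_nonneg fun j _ => Complex.normSq_nonneg _
      have h2 : 0 ≤ ∑ i, Complex.normSq (bF w i) :=
        Finset.sum_nonneg fun i _ => Complex.normSq_nonneg _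
      positivity
    · rw [Complex.ofReal_im]
  · -- eigenspace (d+1)/d
    ext w
    simp only [Set.mem_setOf_eq]
    constructor
    · intro hEw
      obtain ⟨rel1, rel2⟩ := eig_rel d hd0 (((d:ℂ) + 1) / d) w hEw
      have ht : (d:ℂ) * (((d:ℂ) + 1) / d - 1) = 1 := by field_simp; ring
      have hba : ∀ i, bF w i = aF w i := fun i => by rw [← rel1 i, ht, one_mul]
      refine ⟨fun j => ((d:ℂ) + 1)⁻¹ * aF w j, ?_⟩
      funext q
      have hμ0 : ((d:ℂ) + 1) / d ≠ 0 := div_ne_zero hd1 hd0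
      apply mul_left_cancel₀ hμ0
      have hp := eig_point d _ w hEw q
      rw [hp, hba]
      unfold eigVec
      simp only
      split_ifs <;> field_simp <;> ring
    · rintro ⟨v, rfl⟩
      exact Eop_eigVec d hd0 1 (by norm_num) v
  · -- eigenspace (d-1)/d
    ext w
    simp only [Set.mem_setOf_eq]
    constructor
    · intro hEw
      obtain ⟨rel1, rel2⟩ := eig_rel d hd0 (((d:ℂ) - 1) / d) w hEw
      have ht : (d:ℂ) * (((d:ℂ) - 1) / d - 1) = -1 := by field_simp; ring
      have hba : ∀ i, bF w i = -aF w i := fun i => by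
        rw [← rel1 i, ht]; ring
      refine ⟨fun j => -(((d:ℂ) - 1)⁻¹ * aF w j), ?_⟩
      funext q
      have hμ0 : ((d:ℂ) - 1) / d ≠ 0 := div_ne_zero hdm1 hd0
      apply mul_left_cancel₀ hμ0
      have hp := eig_point d _ w hEw q
      rw [hp, hba]
      unfold eigVec
      simp only
      split_ifs <;> field_simp <;> ring
    · rintro ⟨v, rfl⟩
      have := Eop_eigVec d hd0 (-1) (by norm_num) v
      rw [this]
      norm_num
      rw [show (d:ℂ) + -1 = (d:ℂ) - 1 by ring]
  · -- max eigenvalue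
    intro μ hex
    rcases part5 μ hex with rfl | rfl | rfl
    · simp only [Complex.zero_re]
      positivity
    · have : ((d:ℂ) + 1) / d = ((((d:ℝ) + 1) / d : ℝ) : ℂ) := by push_cast; ring
      rw [this, Complex.ofReal_re]
    · have : ((d:ℂ) - 1) / d = ((((d:ℝ) - 1) / d : ℝ) : ℂ) := by push_cast; ring
      rw [this, Complex.ofReal_re]
      rw [div_le_div_iff₀ hdR hdR]
      nlinarith
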